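/- Let A be an invertible n×n real matrix with ‖Ax‖₁ = ‖x‖₁ for all x ∈ ℝⁿ, where ‖x‖₁ = Σᵢ |xᵢ|. Then A is a generalized permutation matrix with entries ±1 at its nonzero positions. -/
import Mathlib

lemma aux_mul_eq_zero_of_abs {a b : ℝ} (h : |a + b| + |a - b| = 2 * (|a| + |b|)) :
    a * b = 0 := by
  have h1 : |a + b| ≤ |a| + |b| := abs_add_le _ _
  have h2 : |a - b| ≤ |a| + |b| := abs_sub _ _
  have e1 : |a + b| = |a| + |b| := by linarith
  have e2 : |a - b| = |a| + |b| := by linarith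
  have s1 : (a + b) ^ 2 = (|a| + |b|) ^ 2 := by rw [← e1, sq_abs]
  have s2 : (a - b) ^ 2 = (|a| + |b|) ^ 2 := by rw [← e2, sq_abs]
  linear_combination (s1 - s2) / 4

/-- An invertible matrix preserving the ℓ¹ norm is a generalized permutation
matrix whose nonzero entries are `±1`. -/
theorem l1_isometry_is_signed_permutation {n : ℕ}
    (A : Matrix (Fin n) (Fin n) ℝ) (hA : IsUnit A)
    (hiso : ∀ x : Fin n → ℝ, ∑ i, |A.mulVec x i| = ∑ i, |x i|) :
    (∀ i : Fin n, ∃! j : Fin n, A i j ≠ 0) ∧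
    (∀ j : Fin n, ∃! i : Fin n, A i j ≠ 0) ∧
    (∀ i j : Fin n, A i j ≠ 0 → A i j = 1 ∨ A i j = -1) := by
  classical
  -- Step 1: each column has ℓ¹ norm 1
  have col : ∀ j, ∑ i, |A i j| = 1 := by
    intro j
    have := hiso (Pi.single j 1)
    simpa [Matrix.mulVec_single, Pi.single_apply, apply_ite abs,
      Finset.sum_ite_eq'] using this
  -- Step 2: distinct columns have disjoint supports
  have disj : ∀ (i j k : Fin n), j ≠ k → A i j * A i k = 0 := by
    intro i j k hjk
    have hp := hiso (Pi.single j 1 + Pi.single k 1)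
    have hm := hiso (Pi.single j 1 - Pi.single k 1)
    have rhsp : ∑ m, |(Pi.single j 1 + Pi.single k 1 : Fin n → ℝ) m| = 2 := by
      have : ∀ m, |(Pi.single j 1 + Pi.single k 1 : Fin n → ℝ) m| =
          (if m = j then (1:ℝ) else 0) + (if m = k then (1:ℝ) else 0) := by
        intro m
        by_cases hmj : m = j <;> by_cases hmk : m = k <;>
          simp_all [Pi.single_apply]
      rw [Finset.sum_congr rfl fun m _ => this m]
      rw [Finset.sum_add_distrib]
      simp
      norm_num
    have rhsm : ∑ m, |(Pi.single j 1 - Pi.single k 1 : Fin n → ℝ) m| = 2 := by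
      have : ∀ m, |(Pi.single j 1 - Pi.single k 1 : Fin n → ℝ) m| =
          (if m = j then (1:ℝ) else 0) + (if m = k then (1:ℝ) else 0) := by
        intro m
        by_cases hmj : m = j <;> by_cases hmk : m = k <;>
          simp_all [Pi.single_apply]
      rw [Finset.sum_congr rfl fun m _ => this m]
      rw [Finset.sum_add_distrib]
      simp
      norm_num
    have lhsp : ∑ i, |A i j + A i k| = 2 := by
      rw [← rhsp, ← hp]
      apply Finset.sum_congr rfl
      intro i _
      simp [Matrix.mulVec_add, Matrix.mulVec_single]
    have lhsm : ∑ i, |A i j - A i k| = 2 := by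
      rw [← rhsm, ← hm]
      apply Finset.sum_congr rfl
      intro i _
      simp [Matrix.mulVec_sub, Matrix.mulVec_add, Matrix.mulVec_neg, Matrix.mulVec_single, sub_eq_add_neg]
    -- pointwise inequality and equality of sums
    have key : ∀ i, |A i j + A i k| + |A i j - A i k| = 2 * (|A i j| + |A i k|) := by
      have hle : ∀ i ∈ Finset.univ, |A i j + A i k| + |A i j - A i k| ≤
          2 * (|A i j| + |A i k|) := by
        intro i _
        have h1 : |A i j + A i k| ≤ |A i j| + |A i k| := abs_add_le _ _
        have h2 : |A i j - A i k| ≤ |A i j| + |A i k| := abs_sub _ _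
        linarith
      have hsum : ∑ i, (|A i j + A i k| + |A i j - A i k|) =
          ∑ i, 2 * (|A i j| + |A i k|) := by
        rw [Finset.sum_add_distrib, lhsp, lhsm]
        rw [Finset.sum_congr rfl (fun i _ => (mul_add 2 (|A i j|) (|A i k|)))]
        rw [Finset.sum_add_distrib, ← Finset.mul_sum, ← Finset.mul_sum, col j, col k]
        norm_num
      intro i
      exact (Finset.sum_eq_sum_iff_of_le hle).1 hsum i (Finset.mem_univ i)
    exact aux_mul_eq_zero_of_abs (key i)
  -- Step 3: each column has a nonzero entry
  have colne : ∀ j, ∃ i, A i j ≠ 0 := by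
    intro j
    by_contra h
    push_neg at h
    have : (1:ℝ) = 0 := by
      rw [← col j]
      exact Finset.sum_eq_zero fun i _ => by rw [h i, abs_zero]
    norm_num at this
  -- Step 4: counting: each column support is a singleton
  set s : Fin n → Finset (Fin n) := fun j => Finset.univ.filter (fun i => A i j ≠ 0) with hs
  have hmem : ∀ i j, i ∈ s j ↔ A i j ≠ 0 := by
    intro i j; simp [hs]
  have hdisj : ∀ j ∈ (Finset.univ : Finset (Fin n)), ∀ k ∈ Finset.univ, j ≠ k →
      Disjoint (s j) (s k) := by
    intro j _ k _ hjk
    rw [Finset.disjoint_left]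
    intro i hij hik
    rw [hmem] at hij hik
    exact hij (by
      have := disj i j k hjk
      rcases mul_eq_zero.1 this with h | h
      · exact h
      · exact absurd h hik)
  have hone : ∀ j, 1 ≤ (s j).card := by
    intro j
    obtain ⟨i, hi⟩ := colne j
    exact Finset.card_pos.2 ⟨i, (hmem i j).2 hi⟩
  have hsumle : ∑ j, (s j).card ≤ n := by
    rw [← Finset.card_biUnion hdisj]
    calc (Finset.univ.biUnion s).card ≤ (Finset.univ : Finset (Fin n)).card :=
          Finset.card_le_card (Finset.subset_univ _)
      _ = n := Finset.card_univ.trans (Fintype.card_fin n)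
  have hcard : ∀ j, (s j).card = 1 := by
    have hsum : ∑ j : Fin n, (1:ℕ) = ∑ j, (s j).card := by
      have h1 : ∑ j : Fin n, (1:ℕ) = n := by simp
      have h2 : ∑ j : Fin n, (1:ℕ) ≤ ∑ j, (s j).card :=
        Finset.sum_le_sum fun j _ => hone j
      omega
    intro j
    exact ((Finset.sum_eq_sum_iff_of_le fun j _ => hone j).1 hsum j
      (Finset.mem_univ j)).symm
  -- column uniqueness
  have coluniq : ∀ j, ∃! i, A i j ≠ 0 := by
    intro j
    obtain ⟨i, hi⟩ := Finset.card_eq_one.1 (hcard j)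
    refine ⟨i, ?_, ?_⟩
    · have : i ∈ s j := hi ▸ Finset.mem_singleton_self i
      exact (hmem i j).1 this
    · intro i' hi'
      have : i' ∈ s j := (hmem i' j).2 hi'
      rw [hi, Finset.mem_singleton] at this
      exact this
  -- row part: bijection
  have rowex : ∀ i, ∃ j, A i j ≠ 0 := by
    set f : Fin n → Fin n := fun j => (colne j).choose with hf
    have hfspec : ∀ j, A (f j) j ≠ 0 := fun j => (colne j).choose_spec
    have hinj : Function.Injective f := by
      intro j k hjk
      by_contra hne
      have := disj (f j) j k hne
      rcases mul_eq_zero.1 this with h | h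
      · exact hfspec j h
      · rw [hjk] at h; exact hfspec k h
    have hsurj : Function.Surjective f := Finite.surjective_of_injective hinj
    intro i
    obtain ⟨j, hj⟩ := hsurj i
    exact ⟨j, hj ▸ hfspec j⟩
  refine ⟨fun i => ?_, coluniq, fun i j hij => ?_⟩
  · obtain ⟨j, hj⟩ := rowex i
    refine ⟨j, hj, fun j' hj' => ?_⟩
    by_contra hne
    rcases mul_eq_zero.1 (disj i j' j hne) with h | h
    · exact hj' h
    · exact hj h
  · -- value ±1
    have habs : |A i j| = 1 := by
      rw [← col j]
      symm
      apply Finset.sum_eq_single i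
      · intro i' _ hne
        by_contra h
        have hA' : A i' j ≠ 0 := fun h0 => h (by rw [h0, abs_zero])
        obtain ⟨i0, _, huniq⟩ := coluniq j
        exact hne ((huniq i' hA').trans (huniq i hij).symm)
      · intro h; exact absurd (Finset.mem_univ i) h
    rcases abs_eq (by norm_num : (0:ℝ) ≤ 1) |>.1 habs with h | h
    · exact Or.inl h
    · exact Or.inr h
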